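/- The strong critical ancestors of a fixed buyer h (connected to s) are totally ordered by the relation 'is a strong critical ancestor of': for any two distinct strong critical ancestors j, k of h, either j is a strong critical ancestor of k or k is a strong critical ancestor of j. -/
import Mathlib


/-- The set of buyers still connected to the seller `s` after removing the set `D`:
vertices `y ≠ s`, `y ∉ D`, admitting a walk from `s` avoiding `D`. -/
def remConn {V : Type*} (G : SimpleGraph V) (s : V) (D : Set V) : Set V :=
  {y | y ≠ s ∧ y ∉ D ∧ ∃ p : G.Walk s y, ∀ d ∈ D, d ∉ p.support}

/-- The highest reported valuation among buyers still connected to `s` after removing `D`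
(`0` if there are none). -/
noncomputable def v1 {V : Type*} (G : SimpleGraph V) (s : V) (v : V → ℝ) (D : Set V) : ℝ :=
  sSup (insert 0 (v '' remConn G s D))

/-- `D` is a cut set of buyer `i`: every walk from the seller `s` to `i` meets `D`. -/
def isCutSet {V : Type*} (G : SimpleGraph V) (s i : V) (D : Set V) : Prop :=
  ∀ p : G.Walk s i, ∃ d ∈ D, d ∈ p.support

/-- `j` is a strong critical ancestor of `i`: `j` is a buyer distinct from `i`
lying on every walk from the seller `s` to `i`. -/
def isSCA {V : Type*} (G : SimpleGraph V) (s i j : V) : Prop :=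
  j ≠ i ∧ j ≠ s ∧ ∀ p : G.Walk s i, j ∈ p.support

/-- The critical descendant set of `x`: buyers `y` such that every walk from `s` to `y`
passes through `x`, together with `x` itself. -/
def critDesc {V : Type*} (G : SimpleGraph V) (s x : V) : Set V :=
  {y | ∀ p : G.Walk s y, x ∈ p.support} ∪ {x}

/-- The strong critical ancestors of a fixed buyer `h` are totally ordered by the
strong-critical-ancestor relation. -/
theorem sca_totally_ordered {V : Type*} [Fintype V]
    (G : SimpleGraph V) (s h : V) (hreach : G.Reachable s h)
    (j k : V) (hj : isSCA G s h j) (hk : isSCA G s h k) (hjk : j ≠ k) :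
    isSCA G s k j ∨ isSCA G s j k := by
  classical
  by_contra hcon
  push_neg at hcon
  obtain ⟨h1, h2⟩ := hcon
  obtain ⟨hjh, hjs, hjall⟩ := hj
  obtain ⟨hkh, hks, hkall⟩ := hk
  have hq1 : ∃ q : G.Walk s k, j ∉ q.support := by
    by_contra hc; push_neg at hc; exact h1 ⟨hjk, hjs, hc⟩
  have hq2 : ∃ q : G.Walk s j, k ∉ q.support := by
    by_contra hc; push_neg at hc; exact h2 ⟨hjk.symm, hks, hc⟩
  obtain ⟨q1, hq1⟩ := hq1
  obtain ⟨q2, hq2⟩ := hq2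
  have key1 : ∀ r : G.Walk k h, j ∈ r.support := by
    intro r
    have := hjall (q1.append r)
    rw [SimpleGraph.Walk.mem_support_append_iff] at this
    tauto
  have key2 : ∀ r : G.Walk j h, k ∈ r.support := by
    intro r
    have := hkall (q2.append r)
    rw [SimpleGraph.Walk.mem_support_append_iff] at this
    tauto
  have main : ∀ n : ℕ, ∀ r : G.Walk k h, r.length ≤ n → False := by
    intro n
    induction n with
    | zero =>
      intro r hr
      exact hkh (r.eq_of_length_eq_zero (Nat.le_zero.mp hr))
    | succ n ih =>
      intro r hr
      have hjr := key1 r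
      have hsplit := r.take_spec hjr
      have hlen : (r.takeUntil j hjr).length + (r.dropUntil j hjr).length = r.length := by
        rw [← SimpleGraph.Walk.length_append, hsplit]
      have htpos : 0 < (r.takeUntil j hjr).length := by
        rcases Nat.eq_zero_or_pos (r.takeUntil j hjr).length with h0 | hp
        · exact absurd ((r.takeUntil j hjr).eq_of_length_eq_zero h0) hjk.symm
        · exact hp
      have hr2 : (r.dropUntil j hjr).length ≤ n := by omega
      set r2 := r.dropUntil j hjr with hr2def
      have hkr2 := key2 r2
      have hr4 : (r2.dropUntil k hkr2).length ≤ n := by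
        have hlen2 : (r2.takeUntil k hkr2).length + (r2.dropUntil k hkr2).length = r2.length := by
          rw [← SimpleGraph.Walk.length_append, r2.take_spec hkr2]
        omega
      exact ih (r2.dropUntil k hkr2) hr4
  obtain ⟨p⟩ := hreach
  have hkp := hkall p
  exact main (p.dropUntil k hkp).length (p.dropUntil k hkp) le_rfl
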